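/- arXiv:2602.03277 — 14 statements merged into one kernel-verified Lean document; each statement's English description precedes it below -/
import Mathlib

section
/- The pair (β, γ) solves the first equation of BlockRR's linear system: (e^ε·b + s₁ − b)·β + s₂·γ = 1. Equivalently, the row of the BlockRR transition matrix corresponding to any true label y ∈ S₁ sums to 1. -/
theorem blockRR_first_row_sum
    (ε b s₁ s₂ l : ℝ) (hε : 0 < ε) (hb : 1 ≤ b) (hs₁ : 0 ≤ s₁) (hs₂ : 0 ≤ s₂)
    (hl0 : 0 ≤ l) (hl : l ≤ s₁) (hs : 1 ≤ s₁ + s₂)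
    (s κ β₁ γ₁ β γ : ℝ)
    (hsdef : s = s₁ + s₂)
    (hκ : κ = (Real.exp ε * b + s₁ - b) * (Real.exp ε * b + s₂ - b) - (s₁ - l) * s₂)
    (hβ₁ : β₁ = (Real.exp ε - 1) * b + l * s₂ / s)
    (hγ₁ : γ₁ = ((Real.exp ε - 1) * b + l) - (l / s) * ((Real.exp ε - 1) * b + s₁))
    (hβ : β = β₁ / κ) (hγ : γ = γ₁ / κ)
    :
    (Real.exp ε * b + s₁ - b) * β + s₂ * γ = 1 := by
  have hexp : 1 < Real.exp ε := by nlinarith [Real.add_one_le_exp ε]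
  have hE : 0 < (Real.exp ε - 1) * b := mul_pos (by linarith) (by linarith)
  have hspos : (0:ℝ) < s := by rw [hsdef]; linarith
  have hκpos : 0 < κ := by rw [hκ]; nlinarith
  subst hβ hγ hβ₁ hγ₁ hκ hsdef
  rw [mul_div_assoc', mul_div_assoc', ← add_div, div_eq_one_iff_eq hκpos.ne']
  field_simp
  ring
end

section
/- The off-block transition probability β is at most the uniform probability: β ≤ 1/s. -/
theorem blockRR_beta_le_uniform
    (ε b s₁ s₂ l : ℝ) (hε : 0 < ε) (hb : 1 ≤ b) (hs₁ : 0 ≤ s₁) (hs₂ : 0 ≤ s₂)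
    (hl0 : 0 ≤ l) (hl : l ≤ s₁) (hs : 1 ≤ s₁ + s₂)
    (s κ β₁ γ₁ β γ : ℝ)
    (hsdef : s = s₁ + s₂)
    (hκ : κ = (Real.exp ε * b + s₁ - b) * (Real.exp ε * b + s₂ - b) - (s₁ - l) * s₂)
    (hβ₁ : β₁ = (Real.exp ε - 1) * b + l * s₂ / s)
    (hγ₁ : γ₁ = ((Real.exp ε - 1) * b + l) - (l / s) * ((Real.exp ε - 1) * b + s₁))
    (hβ : β = β₁ / κ) (hγ : γ = γ₁ / κ)
    :
    β ≤ 1 / s := by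
  have hE : 1 < Real.exp ε := by
    have := Real.add_one_le_exp ε; linarith
  set c := (Real.exp ε - 1) * b with hc
  have hcpos : 0 < c := by
    have : 0 < Real.exp ε - 1 := by linarith
    positivity
  have hs0 : 0 < s := by rw [hsdef]; linarith
  have hκ' : κ = c ^ 2 + c * s + l * s₂ := by rw [hκ, hsdef, hc]; ring
  have hκpos : 0 < κ := by
    rw [hκ']; nlinarith [sq_nonneg c, mul_nonneg hl0 hs₂]
  have key : β₁ * s = c * s + l * s₂ := by
    rw [hβ₁]; field_simp
  rw [hβ, div_le_div_iff₀ hκpos hs0, one_mul, key, hκ']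
  nlinarith [sq_nonneg c]
end

section
/- Assuming additionally b ≤ s, the uniform probability is at most e^ε times the off-block transition probability: 1/s ≤ e^ε·β. -/
theorem blockRR_uniform_le_exp_beta
    (ε b s₁ s₂ l : ℝ) (hε : 0 < ε) (hb : 1 ≤ b) (hs₁ : 0 ≤ s₁) (hs₂ : 0 ≤ s₂)
    (hl0 : 0 ≤ l) (hl : l ≤ s₁) (hs : 1 ≤ s₁ + s₂)
    (s κ β₁ γ₁ β γ : ℝ)
    (hsdef : s = s₁ + s₂)
    (hκ : κ = (Real.exp ε * b + s₁ - b) * (Real.exp ε * b + s₂ - b) - (s₁ - l) * s₂)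
    (hβ₁ : β₁ = (Real.exp ε - 1) * b + l * s₂ / s)
    (hγ₁ : γ₁ = ((Real.exp ε - 1) * b + l) - (l / s) * ((Real.exp ε - 1) * b + s₁))
    (hβ : β = β₁ / κ) (hγ : γ = γ₁ / κ)
    (hbs : b ≤ s)
    :
    1 / s ≤ Real.exp ε * β := by
  set E := Real.exp ε with hE
  have hE1 : 1 < E := by
    rw [hE, ← Real.exp_zero]; exact Real.exp_lt_exp.mpr hε
  subst hsdef
  have hs0 : (0:ℝ) < s₁ + s₂ := by linarith
  have hκ' : κ = (E - 1)^2 * b^2 + (E - 1) * b * (s₁ + s₂) + l * s₂ := by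
    rw [hκ]; ring
  have hκpos : 0 < κ := by
    rw [hκ']
    have h1 : 0 < (E - 1) * b * (s₁ + s₂) := mul_pos (mul_pos (by linarith) (by linarith)) hs0
    nlinarith [sq_nonneg ((E - 1) * b), mul_nonneg hl0 hs₂]
  have key : κ ≤ (s₁ + s₂) * (E * β₁) := by
    rw [hβ₁, hκ']
    have h2 : l * s₂ / (s₁ + s₂) * (s₁ + s₂) = l * s₂ := by
      field_simp
    have hexp : (s₁ + s₂) * (E * ((E - 1) * b + l * s₂ / (s₁ + s₂)))
        = E * (E - 1) * b * (s₁ + s₂) + E * (l * s₂) := by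
      field_simp
    rw [hexp]
    nlinarith [mul_nonneg (mul_nonneg (le_of_lt (by linarith : (0:ℝ) < E - 1)) (by linarith : (0:ℝ) ≤ b)) (by linarith : (0:ℝ) ≤ s₁ + s₂ - b),
      mul_nonneg hl0 hs₂]
  rw [hβ, ← mul_div_assoc, div_le_div_iff₀ hs0 hκpos]
  linarith
end

section
/- The BlockRR transition probabilities are valid probabilities: β > 0 and γ ≥ 0. -/
theorem blockRR_valid_probs
    (ε b s₁ s₂ l : ℝ) (hε : 0 < ε) (hb : 1 ≤ b) (hs₁ : 0 ≤ s₁) (hs₂ : 0 ≤ s₂)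
    (hl0 : 0 ≤ l) (hl : l ≤ s₁) (hs : 1 ≤ s₁ + s₂)
    (s κ β₁ γ₁ β γ : ℝ)
    (hsdef : s = s₁ + s₂)
    (hκ : κ = (Real.exp ε * b + s₁ - b) * (Real.exp ε * b + s₂ - b) - (s₁ - l) * s₂)
    (hβ₁ : β₁ = (Real.exp ε - 1) * b + l * s₂ / s)
    (hγ₁ : γ₁ = ((Real.exp ε - 1) * b + l) - (l / s) * ((Real.exp ε - 1) * b + s₁))
    (hβ : β = β₁ / κ) (hγ : γ = γ₁ / κ)
    :
    0 < β ∧ 0 ≤ γ := by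
  have hE : 1 < Real.exp ε := by
    have := Real.add_one_lt_exp (ne_of_gt hε); linarith
  have hA : 0 < (Real.exp ε - 1) * b := by nlinarith
  have hspos : 0 < s := by rw [hsdef]; linarith
  have hκ' : κ = ((Real.exp ε - 1) * b) ^ 2 + (Real.exp ε - 1) * b * s + l * s₂ := by
    rw [hκ, hsdef]; ring
  have hκpos : 0 < κ := by
    rw [hκ']
    have : 0 ≤ l * s₂ := mul_nonneg hl0 hs₂
    nlinarith
  have hβ₁pos : 0 < β₁ := by
    rw [hβ₁]
    have : 0 ≤ l * s₂ / s := div_nonneg (mul_nonneg hl0 hs₂) hspos.le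
    linarith
  have hγ₁nn : 0 ≤ γ₁ := by
    have : γ₁ = ((Real.exp ε - 1) * b * (s - l) + l * s₂) / s := by
      rw [hγ₁]; field_simp; rw [hsdef]; ring
    rw [this]
    apply div_nonneg _ hspos.le
    have hls : l ≤ s := by rw [hsdef]; linarith
    have : 0 ≤ (Real.exp ε - 1) * b * (s - l) := mul_nonneg hA.le (by linarith)
    nlinarith [mul_nonneg hl0 hs₂]
  exact ⟨hβ ▸ div_pos hβ₁pos hκpos, hγ ▸ div_nonneg hγ₁nn hκpos.le⟩
end

section
/- (Lemma 3.1, first part) β is monotonically increasing in the cardinality l: for all real t, t' with 0 ≤ t ≤ t' ≤ s₁, β(t) ≤ β(t'). -/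
theorem blockRR_beta_monotone
    (ε b s₁ s₂ : ℝ) (hε : 0 < ε) (hb : 1 ≤ b) (hs₁ : 0 ≤ s₁) (hs₂ : 0 ≤ s₂)
    (hs : 1 ≤ s₁ + s₂) (s : ℝ) (hsdef : s = s₁ + s₂)
    (κ β γ : ℝ → ℝ)
    (hκ : ∀ t, κ t = (Real.exp ε * b + s₁ - b) * (Real.exp ε * b + s₂ - b) - (s₁ - t) * s₂)
    (hβ : ∀ t, β t = ((Real.exp ε - 1) * b + t * s₂ / s) / κ t)
    (hγ : ∀ t, γ t = (((Real.exp ε - 1) * b + t) - (t / s) * ((Real.exp ε - 1) * b + s₁)) / κ t)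
    :
    ∀ t t' : ℝ, 0 ≤ t → t ≤ t' → t' ≤ s₁ → β t ≤ β t' := by
  intro t t' ht htt' ht's₁
  have hexp : 1 < Real.exp ε := by
    have := Real.exp_lt_exp.mpr hε
    simpa using this
  set A : ℝ := (Real.exp ε - 1) * b with hA
  have hApos : 0 < A := mul_pos (by linarith) (by linarith)
  have hspos : (0:ℝ) < s := by rw [hsdef]; linarith
  have hκt : κ t = A ^ 2 + A * s + t * s₂ := by rw [hκ, hA, hsdef]; ring
  have hκt' : κ t' = A ^ 2 + A * s + t' * s₂ := by rw [hκ, hA, hsdef]; ring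
  have hκtpos : 0 < κ t := by
    rw [hκt]; nlinarith [sq_nonneg A, mul_nonneg ht hs₂]
  have hκt'pos : 0 < κ t' := by
    rw [hκt']; nlinarith [sq_nonneg A, mul_nonneg (le_trans ht htt') hs₂]
  rw [hβ t, hβ t', div_le_div_iff₀ hκtpos hκt'pos]
  rw [hκt, hκt']
  have key : (t' - t) * s₂ * A ^ 2 ≥ 0 :=
    mul_nonneg (mul_nonneg (sub_nonneg.mpr htt') hs₂) (sq_nonneg A)
  have h2 : (A + t * s₂ / s) * (A ^ 2 + A * s + t' * s₂) * s =
      (A * s + t * s₂) * (A ^ 2 + A * s + t' * s₂) := by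
    field_simp
  have h3 : (A + t' * s₂ / s) * (A ^ 2 + A * s + t * s₂) * s =
      (A * s + t' * s₂) * (A ^ 2 + A * s + t * s₂) := by
    field_simp
  have hmain : (A * s + t * s₂) * (A ^ 2 + A * s + t' * s₂) ≤
      (A * s + t' * s₂) * (A ^ 2 + A * s + t * s₂) := by
    nlinarith [key]
  apply le_of_mul_le_mul_right _ hspos
  rw [h2, h3]
  exact hmain
end

section
/- (Lemma 3.1, second part) γ is monotonically decreasing in the cardinality l: for all real t, t' with 0 ≤ t ≤ t' ≤ s₁, γ(t') ≤ γ(t). -/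
theorem blockRR_gamma_antitone
    (ε b s₁ s₂ : ℝ) (hε : 0 < ε) (hb : 1 ≤ b) (hs₁ : 0 ≤ s₁) (hs₂ : 0 ≤ s₂)
    (hs : 1 ≤ s₁ + s₂) (s : ℝ) (hsdef : s = s₁ + s₂)
    (κ β γ : ℝ → ℝ)
    (hκ : ∀ t, κ t = (Real.exp ε * b + s₁ - b) * (Real.exp ε * b + s₂ - b) - (s₁ - t) * s₂)
    (hβ : ∀ t, β t = ((Real.exp ε - 1) * b + t * s₂ / s) / κ t)
    (hγ : ∀ t, γ t = (((Real.exp ε - 1) * b + t) - (t / s) * ((Real.exp ε - 1) * b + s₁)) / κ t)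
    :
    ∀ t t' : ℝ, 0 ≤ t → t ≤ t' → t' ≤ s₁ → γ t' ≤ γ t := by
  intro t t' ht htt' ht's₁
  have hE : 0 < (Real.exp ε - 1) * b := by
    have h1 : 1 < Real.exp ε := by
      rw [show (1:ℝ) = Real.exp 0 by simp]
      exact Real.exp_lt_exp.2 hε
    nlinarith
  set E := (Real.exp ε - 1) * b with hEdef
  have hκt : ∀ u, κ u = E ^ 2 + E * s + u * s₂ := by
    intro u
    rw [hκ u, hsdef]; ring
  have hs0 : (0:ℝ) < s := by rw [hsdef]; linarith
  have hκpos : ∀ u, 0 ≤ u → 0 < κ u := by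
    intro u hu
    rw [hκt u]
    have : 0 ≤ u * s₂ := mul_nonneg hu hs₂
    nlinarith
  rw [hγ t, hγ t']
  rw [div_le_div_iff₀ (hκpos t' (le_trans ht htt')) (hκpos t ht)]
  rw [hκt t, hκt t']
  have key : 0 ≤ (t' - t) * (E ^ 2 * (E + s₁)) := by
    apply mul_nonneg (by linarith)
    apply mul_nonneg (sq_nonneg E) (by nlinarith)
  have hss : s₂ = s - s₁ := by rw [hsdef]; ring
  rw [hss, ← mul_le_mul_iff_right₀ hs0]
  have e1 : s * ((E + t' - t' / s * (E + s₁)) * (E ^ 2 + E * s + t * (s - s₁)))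
      = (E * s + t' * (s - s₁ - E)) * (E ^ 2 + E * s + t * (s - s₁)) := by
    field_simp
    ring_nf
  have e2 : s * ((E + t - t / s * (E + s₁)) * (E ^ 2 + E * s + t' * (s - s₁)))
      = (E * s + t * (s - s₁ - E)) * (E ^ 2 + E * s + t' * (s - s₁)) := by
    field_simp
    ring_nf
  rw [e1, e2]
  nlinarith [key]
end

section
/- (Lemma 3.1, max_l γ = min_l β) For all real t, t' with 0 ≤ t ≤ s₁ and 0 ≤ t' ≤ s₁, γ(t) ≤ β(t'); in particular the maximum of γ over l equals the minimum of β over l, both being attained at l = 0. -/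
theorem blockRR_max_gamma_eq_min_beta
    (ε b s₁ s₂ : ℝ) (hε : 0 < ε) (hb : 1 ≤ b) (hs₁ : 0 ≤ s₁) (hs₂ : 0 ≤ s₂)
    (hs : 1 ≤ s₁ + s₂) (s : ℝ) (hsdef : s = s₁ + s₂)
    (κ β γ : ℝ → ℝ)
    (hκ : ∀ t, κ t = (Real.exp ε * b + s₁ - b) * (Real.exp ε * b + s₂ - b) - (s₁ - t) * s₂)
    (hβ : ∀ t, β t = ((Real.exp ε - 1) * b + t * s₂ / s) / κ t)
    (hγ : ∀ t, γ t = (((Real.exp ε - 1) * b + t) - (t / s) * ((Real.exp ε - 1) * b + s₁)) / κ t)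
    :
    (∀ t t' : ℝ, 0 ≤ t → t ≤ s₁ → 0 ≤ t' → t' ≤ s₁ → γ t ≤ β t') ∧ (∀ t : ℝ, 0 ≤ t → t ≤ s₁ → γ t ≤ γ 0) ∧ (∀ t : ℝ, 0 ≤ t → t ≤ s₁ → β 0 ≤ β t) ∧ γ 0 = β 0 := by
  have hE : 1 < Real.exp ε := by
    have := Real.add_one_lt_exp (x := ε) (by positivity)
    linarith
  set E := Real.exp ε with hEdef
  have hc : 0 < (E - 1) * b := by nlinarith
  subst hsdef
  set s := s₁ + s₂ with hsdef
  have hs0 : (0:ℝ) < s := by rw [hsdef]; linarith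
  have hκform : ∀ t, κ t = (E - 1) * b * ((E - 1) * b + s) + t * s₂ := by
    intro t; rw [hκ t, hsdef]; ring
  have hκpos : ∀ t, 0 ≤ t → 0 < κ t := by
    intro t ht; rw [hκform t]; nlinarith
  have heq : γ 0 = β 0 := by
    rw [hγ, hβ]
    field_simp
    ring
  have hg : ∀ t : ℝ, 0 ≤ t → t ≤ s₁ → γ t ≤ γ 0 := by
    intro t ht ht'
    rw [hγ t, hγ 0]
    rw [div_le_div_iff₀ (hκpos t ht) (hκpos 0 le_rfl)]
    rw [hκform t, hκform 0]
    have h1 : s₂ ≤ s := by rw [hsdef]; linarith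
    have key : 0 ≤ (E - 1) * b * ((E - 1) * b) * t * ((E - 1) * b + s₁) := by positivity
    rw [div_mul_eq_mul_div, sub_div' (ne_of_gt hs0)]
    rw [show ((E - 1) * b + 0 - 0 / s * ((E - 1) * b + s₁)) = (E - 1) * b by
      field_simp; ring]
    rw [div_mul_eq_mul_div, div_le_iff₀ hs0]
    rw [hsdef]; nlinarith [key]
  have hbmon : ∀ t : ℝ, 0 ≤ t → t ≤ s₁ → β 0 ≤ β t := by
    intro t ht ht' 
    rw [hβ t, hβ 0]
    rw [div_le_div_iff₀ (hκpos 0 le_rfl) (hκpos t ht)]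
    rw [hκform t, hκform 0]
    have key : 0 ≤ (E - 1) * b * ((E - 1) * b) * t * s₂ := by positivity
    rw [show ((E - 1) * b + 0 * s₂ / s) = (E - 1) * b by field_simp; ring]
    rw [add_div' _ _ _ (ne_of_gt hs0), div_mul_eq_mul_div, le_div_iff₀ hs0]
    rw [hsdef]; nlinarith [key]
  refine ⟨fun t t' ht ht1 ht2 ht3 => ?_, hg, hbmon, heq⟩
  calc γ t ≤ γ 0 := hg t ht ht1
    _ = β 0 := heq
    _ ≤ β t' := hbmon t' ht2 ht3
end

section
/- (Theorem 3.2) The BlockRR mechanism satisfies ε-label differential privacy: for all labels y, y' ∈ S and all privatized labels ỹ ∈ S̃, the transition probabilities satisfy p(y, ỹ) ≤ e^ε · p(y', ỹ). -/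
/-- Theorem 3.2: the BlockRR mechanism satisfies ε-label differential privacy. -/
theorem blockRR_label_dp {α : Type*} [DecidableEq α]
    (S₁ S₂ T₁ T₂ Δ : Finset α)
    (hS : Disjoint S₁ S₂) (hT : Disjoint T₁ T₂)
    (hTcard : 1 ≤ (T₁ ∪ T₂).card)
    (ε : ℝ) (hε : 0 < ε) (b l : ℕ) (hb : 1 ≤ b)
    (B : α → Finset α)
    (hB₁ : ∀ y ∈ S₁, B y ⊆ T₁ ∧ (B y).card = b)
    (hB₂ : ∀ y ∈ S₂, B y ⊆ T₂ ∧ (B y).card = b)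
    (hΔ : Δ ⊆ T₁) (hΔcard : Δ.card = l)
    (s₁ s₂ s κ β γ : ℝ)
    (hs₁ : s₁ = T₁.card) (hs₂ : s₂ = T₂.card) (hsdef : s = s₁ + s₂)
    (hκ : κ = (Real.exp ε * b + s₁ - b) * (Real.exp ε * b + s₂ - b) - (s₁ - l) * s₂)
    (hβ : β = ((Real.exp ε - 1) * b + l * s₂ / s) / κ)
    (hγ : γ = (((Real.exp ε - 1) * b + l) - (l / s) * ((Real.exp ε - 1) * b + s₁)) / κ)
    (p : α → α → ℝ)
    (hp : ∀ y ∈ S₁ ∪ S₂, ∀ z ∈ T₁ ∪ T₂,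
      p y z = if y ∈ S₁ then
          (if z ∈ B y then Real.exp ε * β else if z ∈ T₁ then β else γ)
        else
          (if z ∈ Δ then 1 / s else if z ∈ T₁ then β
            else if z ∈ B y then Real.exp ε * γ else γ)) :
    ∀ y ∈ S₁ ∪ S₂, ∀ y' ∈ S₁ ∪ S₂, ∀ z ∈ T₁ ∪ T₂,
      p y z ≤ Real.exp ε * p y' z := by
  intro y hy y' hy' z hz
  set E := Real.exp ε with hE
  have he : 1 < E := by
    rw [hE, show (1:ℝ) = Real.exp 0 from (Real.exp_zero).symm]
    exact Real.exp_lt_exp.mpr hε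
  have hE0 : 0 ≤ E := by positivity
  have hb' : (1:ℝ) ≤ b := by exact_mod_cast hb
  have hb0 : (0:ℝ) ≤ b := by linarith
  have hs1 : (0:ℝ) ≤ s₁ := by rw [hs₁]; positivity
  have hs2 : (0:ℝ) ≤ s₂ := by rw [hs₂]; positivity
  have hl : (l:ℝ) ≤ s₁ := by
    rw [hs₁]
    exact_mod_cast hΔcard ▸ Finset.card_le_card hΔ
  have hl0 : (0:ℝ) ≤ l := Nat.cast_nonneg l
  have hs : (1:ℝ) ≤ s := by
    rw [hsdef, hs₁, hs₂]
    have h1 := Finset.card_union_le T₁ T₂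
    have h2 : (1:ℝ) ≤ ((T₁ ∪ T₂).card : ℝ) := by exact_mod_cast hTcard
    have h3 : ((T₁ ∪ T₂).card : ℝ) ≤ (T₁.card : ℝ) + (T₂.card : ℝ) := by exact_mod_cast h1
    linarith
  have hspos : (0:ℝ) < s := by linarith
  have hκeq : κ = (E-1)^2*b^2 + (E-1)*b*s + l*s₂ := by rw [hκ, hsdef]; ring
  have hκpos : 0 < κ := by
    rw [hκeq]
    have h1 : (0:ℝ) < (E-1)*b*s :=
      mul_pos (mul_pos (by linarith) (by linarith)) hspos
    nlinarith [sq_nonneg ((E-1)*(b:ℝ)), mul_nonneg hl0 hs2]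
  have hnum1 : ((E-1)*b + (l:ℝ)*s₂/s)*s = (E-1)*b*s + l*s₂ := by
    field_simp
  have hβpos : 0 < β := by
    rw [hβ]
    apply div_pos _ hκpos
    have h1 : (0:ℝ) ≤ (l:ℝ)*s₂/s := by positivity
    have h2 : (0:ℝ) < (E-1)*b := mul_pos (by linarith) (by linarith)
    linarith
  have hγnn : 0 ≤ γ := by
    rw [hγ]
    apply div_nonneg _ hκpos.le
    have key : (((E-1)*b + (l:ℝ)) - (l:ℝ)/s*((E-1)*b + s₁))*s
        = (E-1)*b*(s - l) + (l:ℝ)*s₂ := by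
      field_simp
      linear_combination ((l:ℝ)) * hsdef
    have h1 : 0 ≤ (E-1)*b*(s - l) + (l:ℝ)*s₂ := by
      have h2 : (0:ℝ) ≤ (E-1)*b*(s-l) :=
        mul_nonneg (mul_nonneg (by linarith) (by linarith)) (by linarith)
      have h3 := mul_nonneg hl0 hs2
      linarith
    refine le_of_mul_le_mul_right ?_ hspos
    rw [zero_mul, key]
    exact h1
  have hβκ : β*κ = (E-1)*b + (l:ℝ)*s₂/s := by
    rw [hβ, div_mul_cancel₀ _ hκpos.ne']
  -- β ≤ 1/s
  have haux1 : β ≤ 1/s := by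
    rw [le_div_iff₀ hspos]
    have h1 : (β*κ)*s ≤ κ := by
      rw [hβκ, hnum1, hκeq]
      have hsq : (0:ℝ) ≤ (E-1)^2*(b:ℝ)^2 := by positivity
      linarith
    refine le_of_mul_le_mul_right ?_ hκpos
    calc β*s*κ = (β*κ)*s := by ring
      _ ≤ κ := h1
      _ = 1*κ := (one_mul κ).symm
  have hEβ : β ≤ E*β := by
    have h := mul_nonneg (by linarith : (0:ℝ) ≤ E-1) hβpos.le
    linarith
  have hEγ : γ ≤ E*γ := by
    have h := mul_nonneg (by linarith : (0:ℝ) ≤ E-1) hγnn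
    linarith
  -- for z ∈ T₁ all values lie in [β, E*β]; for z ∈ T₂ in [γ, E*γ]
  have key : ∀ w ∈ S₁ ∪ S₂,
      (z ∈ T₁ → β ≤ p w z ∧ p w z ≤ E*β) ∧ (z ∈ T₂ → γ ≤ p w z ∧ p w z ≤ E*γ) := by
    intro w hw
    rw [hp w hw z hz]
    rcases Finset.mem_union.mp hw with hw1 | hw2
    · rw [if_pos hw1]
      constructor
      · intro hzT1
        by_cases hzB : z ∈ B w
        · rw [if_pos hzB]; exact ⟨hEβ, le_refl _⟩
        · rw [if_neg hzB, if_pos hzT1]; exact ⟨le_refl _, hEβ⟩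
      · intro hzT2
        have hzT1 : z ∉ T₁ := Finset.disjoint_right.mp hT hzT2
        have hzB : z ∉ B w := fun h => hzT1 ((hB₁ w hw1).1 h)
        rw [if_neg hzB, if_neg hzT1]
        exact ⟨le_refl _, hEγ⟩
    · have hw1 : w ∉ S₁ := fun h => Finset.disjoint_left.mp hS h hw2
      rw [if_neg hw1]
      have hbs2 : (b:ℝ) ≤ s₂ := by
        rw [hs₂]
        exact_mod_cast (hB₂ w hw2).2 ▸ Finset.card_le_card (hB₂ w hw2).1
      have haux2 : 1/s ≤ E*β := by
        rw [div_le_iff₀ hspos]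
        have h2 : κ ≤ E*((β*κ))*s := by
          rw [hβκ, mul_assoc, hnum1, hκeq]
          have hA : (0:ℝ) ≤ (E-1)^2*b*(s-b) :=
            mul_nonneg (mul_nonneg (sq_nonneg _) hb0) (by linarith)
          have hBB : (0:ℝ) ≤ (E-1)*((l:ℝ)*s₂) :=
            mul_nonneg (by linarith) (mul_nonneg hl0 hs2)
          have hid : E*(((E-1)*(b:ℝ)*s + l*s₂)) =
              ((E-1)^2*(b:ℝ)^2 + (E-1)*b*s + l*s₂) + ((E-1)^2*b*(s-b) + (E-1)*((l:ℝ)*s₂)) := by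
            ring
          linarith
        refine le_of_mul_le_mul_right ?_ hκpos
        calc 1*κ = κ := one_mul κ
          _ ≤ E*(β*κ)*s := h2
          _ = E*β*s*κ := by ring
      constructor
      · intro hzT1
        have hzB : z ∉ B w := fun h => (Finset.disjoint_left.mp hT hzT1) ((hB₂ w hw2).1 h)
        by_cases hzΔ : z ∈ Δ
        · rw [if_pos hzΔ]; exact ⟨haux1, haux2⟩
        · rw [if_neg hzΔ, if_pos hzT1]; exact ⟨le_refl _, hEβ⟩
      · intro hzT2
        have hzT1 : z ∉ T₁ := Finset.disjoint_right.mp hT hzT2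
        have hzΔ : z ∉ Δ := fun h => hzT1 (hΔ h)
        rw [if_neg hzΔ, if_neg hzT1]
        by_cases hzB : z ∈ B w
        · rw [if_pos hzB]; exact ⟨hEγ, le_refl _⟩
        · rw [if_neg hzB]; exact ⟨le_refl _, hEγ⟩
  rcases Finset.mem_union.mp hz with hz1 | hz2
  · obtain ⟨_, hu1⟩ := (key y hy).1 hz1
    obtain ⟨hl2, _⟩ := (key y' hy').1 hz1
    calc p y z ≤ E*β := hu1
      _ ≤ E * p y' z := mul_le_mul_of_nonneg_left hl2 hE0
  · obtain ⟨_, hu1⟩ := (key y hy).2 hz2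
    obtain ⟨hl2, _⟩ := (key y' hy').2 hz2
    calc p y z ≤ E*γ := hu1
      _ ≤ E * p y' z := mul_le_mul_of_nonneg_left hl2 hE0
end

section
/- Each row of the BlockRR transition function is a probability distribution over the privatized labels: for every y ∈ S, the sum over ỹ ∈ S̃ of p(y, ỹ) equals 1. -/
lemma sum_ite_subset_aux {α : Type*} [DecidableEq α] {U T : Finset α} (h : U ⊆ T) (a c : ℝ) :
    ∑ z ∈ T, (if z ∈ U then a else c) = (T.card : ℝ) * c + (U.card : ℝ) * (a - c) := by
  have h1 : ∀ z ∈ T, (if z ∈ U then a else c) = c + (if z ∈ U then a - c else 0) := by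
    intro z hz; by_cases hzU : z ∈ U <;> simp [hzU]
  rw [Finset.sum_congr rfl h1, Finset.sum_add_distrib, Finset.sum_const,
    Finset.sum_ite_mem, Finset.inter_eq_right.mpr h, Finset.sum_const]
  simp [nsmul_eq_mul]

/-- Each row of the BlockRR transition function sums to 1 over the privatized labels. -/
theorem blockRR_row_sum_one {α : Type*} [DecidableEq α]
    (S₁ S₂ T₁ T₂ Δ : Finset α)
    (hS : Disjoint S₁ S₂) (hT : Disjoint T₁ T₂)
    (hTcard : 1 ≤ (T₁ ∪ T₂).card)
    (ε : ℝ) (hε : 0 < ε) (b l : ℕ) (hb : 1 ≤ b)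
    (B : α → Finset α)
    (hB₁ : ∀ y ∈ S₁, B y ⊆ T₁ ∧ (B y).card = b)
    (hB₂ : ∀ y ∈ S₂, B y ⊆ T₂ ∧ (B y).card = b)
    (hΔ : Δ ⊆ T₁) (hΔcard : Δ.card = l)
    (s₁ s₂ s κ β γ : ℝ)
    (hs₁ : s₁ = T₁.card) (hs₂ : s₂ = T₂.card) (hsdef : s = s₁ + s₂)
    (hκ : κ = (Real.exp ε * b + s₁ - b) * (Real.exp ε * b + s₂ - b) - (s₁ - l) * s₂)
    (hβ : β = ((Real.exp ε - 1) * b + l * s₂ / s) / κ)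
    (hγ : γ = (((Real.exp ε - 1) * b + l) - (l / s) * ((Real.exp ε - 1) * b + s₁)) / κ)
    (p : α → α → ℝ)
    (hp : ∀ y ∈ S₁ ∪ S₂, ∀ z ∈ T₁ ∪ T₂,
      p y z = if y ∈ S₁ then
          (if z ∈ B y then Real.exp ε * β else if z ∈ T₁ then β else γ)
        else
          (if z ∈ Δ then 1 / s else if z ∈ T₁ then β
            else if z ∈ B y then Real.exp ε * γ else γ)) :
    ∀ y ∈ S₁ ∪ S₂, ∑ z ∈ T₁ ∪ T₂, p y z = 1 := by
  intro y hy
  have hs₁0 : (0:ℝ) ≤ s₁ := by rw [hs₁]; positivity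
  have hs₂0 : (0:ℝ) ≤ s₂ := by rw [hs₂]; positivity
  have hl0 : (0:ℝ) ≤ (l:ℝ) := by positivity
  have hspos : (0:ℝ) < s := by
    have h1 : (1:ℝ) ≤ ((T₁ ∪ T₂).card : ℝ) := by exact_mod_cast hTcard
    have h2 : ((T₁ ∪ T₂).card : ℝ) ≤ s₁ + s₂ := by
      rw [hs₁, hs₂]
      exact_mod_cast Finset.card_union_le T₁ T₂
    linarith [hsdef ▸ (le_trans h1 h2)]
  have hsne' : s₁ + s₂ ≠ 0 := by rw [← hsdef]; exact ne_of_gt hspos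
  have hE : (1:ℝ) < Real.exp ε := by
    nlinarith [Real.add_one_le_exp ε]
  have hbR : (1:ℝ) ≤ (b:ℝ) := by exact_mod_cast hb
  have hx : (0:ℝ) < (Real.exp ε - 1) * b := by nlinarith
  have hκpos : (0:ℝ) < κ := by
    have hκ' : κ = ((Real.exp ε - 1) * b) * ((Real.exp ε - 1) * b) +
        ((Real.exp ε - 1) * b) * s + (l:ℝ) * s₂ := by
      rw [hκ, hsdef]; ring
    nlinarith [mul_pos hx hx, mul_pos hx hspos, mul_nonneg hl0 hs₂0]
  have hκne' : (Real.exp ε * b + s₁ - b) * (Real.exp ε * b + s₂ - b) - (s₁ - (l:ℝ)) * s₂ ≠ 0 := by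
    rw [← hκ]; exact ne_of_gt hκpos
  have key1 : (Real.exp ε * b + s₁ - b) * β + s₂ * γ = 1 := by
    rw [hβ, hγ, hsdef]
    field_simp [hκpos.ne']
    rw [hκ]
    ring
  have key2 : (l:ℝ) * (1 / s) + (s₁ - l) * β + (Real.exp ε * b + s₂ - b) * γ = 1 := by
    rw [hβ, hγ, hsdef]
    field_simp [hκpos.ne']
    rw [hκ]
    ring
  have hsum : ∑ z ∈ T₁ ∪ T₂, p y z = ∑ z ∈ T₁ ∪ T₂,
      (if y ∈ S₁ then
          (if z ∈ B y then Real.exp ε * β else if z ∈ T₁ then β else γ)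
        else
          (if z ∈ Δ then 1 / s else if z ∈ T₁ then β
            else if z ∈ B y then Real.exp ε * γ else γ)) :=
    Finset.sum_congr rfl fun z hz => hp y hy z hz
  rw [hsum]
  by_cases hy1 : y ∈ S₁
  · obtain ⟨hBsub, hBcard⟩ := hB₁ y hy1
    simp only [if_pos hy1]
    rw [Finset.sum_union hT]
    have e1 : ∑ z ∈ T₁, (if z ∈ B y then Real.exp ε * β else if z ∈ T₁ then β else γ)
        = ∑ z ∈ T₁, (if z ∈ B y then Real.exp ε * β else β) := by
      refine Finset.sum_congr rfl fun z hz => ?_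
      by_cases hzB : z ∈ B y <;> simp [hzB, hz]
    have e2 : ∑ z ∈ T₂, (if z ∈ B y then Real.exp ε * β else if z ∈ T₁ then β else γ)
        = ∑ z ∈ T₂, γ := by
      refine Finset.sum_congr rfl fun z hz => ?_
      have hz1 : z ∉ T₁ := (Finset.disjoint_right.mp hT) hz
      have hzB : z ∉ B y := fun h => hz1 (hBsub h)
      simp [hzB, hz1]
    rw [e1, e2, sum_ite_subset_aux hBsub, Finset.sum_const, nsmul_eq_mul,
      hBcard, ← hs₁, ← hs₂]
    linear_combination key1
  · have hy2 : y ∈ S₂ := by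
      rcases Finset.mem_union.mp hy with h | h
      · exact absurd h hy1
      · exact h
    obtain ⟨hBsub, hBcard⟩ := hB₂ y hy2
    simp only [if_neg hy1]
    rw [Finset.sum_union hT]
    have e1 : ∑ z ∈ T₁, (if z ∈ Δ then 1 / s else if z ∈ T₁ then β
          else if z ∈ B y then Real.exp ε * γ else γ)
        = ∑ z ∈ T₁, (if z ∈ Δ then 1 / s else β) := by
      refine Finset.sum_congr rfl fun z hz => ?_
      by_cases hzΔ : z ∈ Δ <;> simp [hzΔ, hz]
    have e2 : ∑ z ∈ T₂, (if z ∈ Δ then 1 / s else if z ∈ T₁ then β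
          else if z ∈ B y then Real.exp ε * γ else γ)
        = ∑ z ∈ T₂, (if z ∈ B y then Real.exp ε * γ else γ) := by
      refine Finset.sum_congr rfl fun z hz => ?_
      have hz1 : z ∉ T₁ := (Finset.disjoint_right.mp hT) hz
      have hzΔ : z ∉ Δ := fun h => hz1 (hΔ h)
      by_cases hzB : z ∈ B y <;> simp [hzΔ, hz1, hzB]
    rw [e1, e2, sum_ite_subset_aux hΔ, sum_ite_subset_aux hBsub,
      hBcard, hΔcard, ← hs₁, ← hs₂]
    linear_combination key2
end

section
/- The identity e^ε·β₁·s − κ = (e^ε − 1)²·b·(s − b) + (e^ε − 1)·l·s₂ holds; consequently, when b ≤ s this quantity is nonnegative, which is the key step showing 1/s ≤ e^ε·β in the proof of Theorem 3.2. -/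
theorem blockRR_key_identity
    (ε b s₁ s₂ l : ℝ) (hε : 0 < ε) (hb : 1 ≤ b) (hs₁ : 0 ≤ s₁) (hs₂ : 0 ≤ s₂)
    (hl0 : 0 ≤ l) (hl : l ≤ s₁) (hs : 1 ≤ s₁ + s₂)
    (s κ β₁ γ₁ β γ : ℝ)
    (hsdef : s = s₁ + s₂)
    (hκ : κ = (Real.exp ε * b + s₁ - b) * (Real.exp ε * b + s₂ - b) - (s₁ - l) * s₂)
    (hβ₁ : β₁ = (Real.exp ε - 1) * b + l * s₂ / s)
    (hγ₁ : γ₁ = ((Real.exp ε - 1) * b + l) - (l / s) * ((Real.exp ε - 1) * b + s₁))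
    (hβ : β = β₁ / κ) (hγ : γ = γ₁ / κ)
    :
    Real.exp ε * β₁ * s - κ = (Real.exp ε - 1) ^ 2 * b * (s - b) + (Real.exp ε - 1) * l * s₂ ∧ (b ≤ s → 0 ≤ Real.exp ε * β₁ * s - κ) := by
  have hs0 : (0:ℝ) < s := by rw [hsdef]; linarith
  have hE : 1 < Real.exp ε := by
    have := Real.add_one_lt_exp (ne_of_gt hε); linarith
  have hid : Real.exp ε * β₁ * s - κ
      = (Real.exp ε - 1) ^ 2 * b * (s - b) + (Real.exp ε - 1) * l * s₂ := by
    subst hβ₁ hκ hsdef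
    field_simp
    ring
  refine ⟨hid, fun hbs => ?_⟩
  rw [hid]
  have h1 : 0 ≤ (Real.exp ε - 1) ^ 2 * b * (s - b) :=
    mul_nonneg (mul_nonneg (sq_nonneg _) (by linarith)) (by linarith)
  have h2 : 0 ≤ (Real.exp ε - 1) * l * s₂ :=
    mul_nonneg (mul_nonneg (by linarith) hl0) hs₂
  linarith
end

section
/- (Feasibility bound for minority labels, inequality (4)) For every y ∈ S₂, any feasible conditional distribution p for BlockRR's optimization problem satisfies ∑_{ỹ ∈ B(y)} p(y, ỹ) + e^{−ε} · ∑_{ỹ ∈ S̃ \ (B(y) ∪ Δ)} p(ỹ, ỹ) + |Δ|/|S̃| ≤ 1. -/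
/-- Feasibility bound (inequality (4)) for minority labels `y ∈ S₂`. -/
theorem blockRR_feasibility_minority {α : Type*} [DecidableEq α]
    (S₁ S₂ T₁ T₂ Δ : Finset α)
    (hS : Disjoint S₁ S₂) (hT : Disjoint T₁ T₂)
    (hsub : T₁ ∪ T₂ ⊆ S₁ ∪ S₂) (hTcard : 1 ≤ (T₁ ∪ T₂).card)
    (hΔ : Δ ⊆ T₁)
    (ε : ℝ) (hε : 0 < ε)
    (B : α → Finset α)
    (hB : ∀ y ∈ S₂, B y ⊆ T₁ ∪ T₂ ∧ Disjoint (B y) Δ)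
    (p : α → α → ℝ)
    (hnn : ∀ y ∈ S₁ ∪ S₂, ∀ z ∈ T₁ ∪ T₂, 0 ≤ p y z)
    (hsum : ∀ y ∈ S₁ ∪ S₂, ∑ z ∈ T₁ ∪ T₂, p y z = 1)
    (hdp : ∀ y ∈ S₁ ∪ S₂, ∀ y' ∈ S₁ ∪ S₂, ∀ z ∈ T₁ ∪ T₂,
      p y z ≤ Real.exp ε * p y' z)
    (hΔp : ∀ y ∈ S₂, ∀ z ∈ Δ, p y z = 1 / (T₁ ∪ T₂).card) :
    ∀ y ∈ S₂,
      ∑ z ∈ B y, p y z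
        + Real.exp (-ε) * ∑ z ∈ (T₁ ∪ T₂) \ (B y ∪ Δ), p z z
        + (Δ.card : ℝ) / (T₁ ∪ T₂).card ≤ 1 := by
  intro y hy
  have hy' : y ∈ S₁ ∪ S₂ := Finset.mem_union_right _ hy
  obtain ⟨hBsub, hBΔ⟩ := hB y hy
  have hΔsub : Δ ⊆ T₁ ∪ T₂ := hΔ.trans (Finset.subset_union_left)
  have hUsub : B y ∪ Δ ⊆ T₁ ∪ T₂ := Finset.union_subset hBsub hΔsub
  have hsplit : ∑ z ∈ (T₁ ∪ T₂) \ (B y ∪ Δ), p y z + ∑ z ∈ B y ∪ Δ, p y z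
      = ∑ z ∈ T₁ ∪ T₂, p y z := Finset.sum_sdiff hUsub
  have hU : ∑ z ∈ B y ∪ Δ, p y z = ∑ z ∈ B y, p y z + ∑ z ∈ Δ, p y z :=
    Finset.sum_union hBΔ
  have hΔval : ∑ z ∈ Δ, p y z = (Δ.card : ℝ) / (T₁ ∪ T₂).card := by
    rw [Finset.sum_congr rfl (fun z hz => hΔp y hy z hz), Finset.sum_const,
      nsmul_eq_mul]
    ring
  have hrest : Real.exp (-ε) * ∑ z ∈ (T₁ ∪ T₂) \ (B y ∪ Δ), p z z
      ≤ ∑ z ∈ (T₁ ∪ T₂) \ (B y ∪ Δ), p y z := by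
    rw [Finset.mul_sum]
    apply Finset.sum_le_sum
    intro z hz
    have hzT : z ∈ T₁ ∪ T₂ := (Finset.mem_sdiff.mp hz).1
    have hzS : z ∈ S₁ ∪ S₂ := hsub hzT
    have := hdp z hzS y hy' z hzT
    calc Real.exp (-ε) * p z z ≤ Real.exp (-ε) * (Real.exp ε * p y z) := by
          exact mul_le_mul_of_nonneg_left this (Real.exp_nonneg _)
      _ = p y z := by
          rw [← mul_assoc, ← Real.exp_add]
          simp
  have h1 := hsum y hy'
  nlinarith [hrest, hsplit, hU, hΔval]
end

section
/- (Feasibility bound for majority labels, inequality (5)) For every y ∈ S₁ with B(y) ⊆ S̃₁, any feasible conditional distribution p for BlockRR's optimization problem satisfies ∑_{ỹ ∈ B(y)} p(y, ỹ) + e^{−ε} · ∑_{ỹ ∈ S̃₁ \ B(y)} p(ỹ, ỹ) + e^{−ε} · ∑_{ỹ ∈ S̃₂} p(ỹ, ỹ) ≤ 1. -/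
/-- Feasibility bound (inequality (5)) for majority labels `y ∈ S₁` with `B y ⊆ T₁`. -/
theorem blockRR_feasibility_majority {α : Type*} [DecidableEq α]
    (S₁ S₂ T₁ T₂ Δ : Finset α)
    (hS : Disjoint S₁ S₂) (hT : Disjoint T₁ T₂)
    (hsub : T₁ ∪ T₂ ⊆ S₁ ∪ S₂) (hTcard : 1 ≤ (T₁ ∪ T₂).card)
    (hΔ : Δ ⊆ T₁)
    (ε : ℝ) (hε : 0 < ε)
    (B : α → Finset α)
    (hB : ∀ y ∈ S₂, B y ⊆ T₁ ∪ T₂ ∧ Disjoint (B y) Δ)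
    (p : α → α → ℝ)
    (hnn : ∀ y ∈ S₁ ∪ S₂, ∀ z ∈ T₁ ∪ T₂, 0 ≤ p y z)
    (hsum : ∀ y ∈ S₁ ∪ S₂, ∑ z ∈ T₁ ∪ T₂, p y z = 1)
    (hdp : ∀ y ∈ S₁ ∪ S₂, ∀ y' ∈ S₁ ∪ S₂, ∀ z ∈ T₁ ∪ T₂,
      p y z ≤ Real.exp ε * p y' z)
    (hΔp : ∀ y ∈ S₂, ∀ z ∈ Δ, p y z = 1 / (T₁ ∪ T₂).card) :
    ∀ y ∈ S₁, B y ⊆ T₁ →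
      ∑ z ∈ B y, p y z
        + Real.exp (-ε) * ∑ z ∈ T₁ \ B y, p z z
        + Real.exp (-ε) * ∑ z ∈ T₂, p z z ≤ 1 := by
  intro y hy hBy
  have hyS : y ∈ S₁ ∪ S₂ := Finset.mem_union_left _ hy
  have hBsub : B y ⊆ T₁ ∪ T₂ := hBy.trans Finset.subset_union_left
  -- pointwise bound: e^{-ε} p z z ≤ p y z for z ∈ (T₁ ∪ T₂) \ B y
  have key : ∀ z ∈ (T₁ ∪ T₂) \ B y, Real.exp (-ε) * p z z ≤ p y z := by
    intro z hz
    have hzT : z ∈ T₁ ∪ T₂ := (Finset.mem_sdiff.mp hz).1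
    have hzS : z ∈ S₁ ∪ S₂ := hsub hzT
    have := hdp z hzS y hyS z hzT
    have hexp : (0:ℝ) < Real.exp ε := Real.exp_pos _
    rw [Real.exp_neg]
    calc (Real.exp ε)⁻¹ * p z z ≤ (Real.exp ε)⁻¹ * (Real.exp ε * p y z) := by
          apply mul_le_mul_of_nonneg_left this (by positivity)
      _ = p y z := by field_simp
  have hsplit : ∑ z ∈ B y, p y z + ∑ z ∈ (T₁ ∪ T₂) \ B y, p y z = 1 := by
    rw [add_comm, Finset.sum_sdiff hBsub]; exact hsum y hyS
  have hset : (T₁ ∪ T₂) \ B y = (T₁ \ B y) ∪ T₂ := by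
    ext z
    simp only [Finset.mem_sdiff, Finset.mem_union]
    constructor
    · rintro ⟨h1 | h1, h2⟩
      · exact Or.inl ⟨h1, h2⟩
      · exact Or.inr h1
    · rintro (⟨h1, h2⟩ | h1)
      · exact ⟨Or.inl h1, h2⟩
      · exact ⟨Or.inr h1, fun hzB => Finset.disjoint_left.mp hT (hBy hzB) h1⟩
  have hdisj : Disjoint (T₁ \ B y) T₂ := Finset.disjoint_of_subset_left Finset.sdiff_subset hT
  have hsum2 : ∑ z ∈ (T₁ ∪ T₂) \ B y, p z z
      = ∑ z ∈ T₁ \ B y, p z z + ∑ z ∈ T₂, p z z := by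
    rw [hset, Finset.sum_union hdisj]
  have hb : Real.exp (-ε) * ∑ z ∈ (T₁ ∪ T₂) \ B y, p z z
      ≤ ∑ z ∈ (T₁ ∪ T₂) \ B y, p y z := by
    rw [Finset.mul_sum]
    exact Finset.sum_le_sum key
  have := hb
  rw [hsum2, mul_add] at this
  linarith [hsplit]
end

section
/- (Strict version of Lemma 3.1, first part) If s₂ ≥ 1, then β is strictly increasing in the cardinality l: for all real t, t' with 0 ≤ t < t' ≤ s₁, β(t) < β(t'). -/
theorem blockRR_beta_strictMono
    (ε b s₁ s₂ : ℝ) (hε : 0 < ε) (hb : 1 ≤ b) (hs₁ : 0 ≤ s₁) (hs₂ : 0 ≤ s₂)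
    (hs : 1 ≤ s₁ + s₂) (s : ℝ) (hsdef : s = s₁ + s₂)
    (κ β γ : ℝ → ℝ)
    (hκ : ∀ t, κ t = (Real.exp ε * b + s₁ - b) * (Real.exp ε * b + s₂ - b) - (s₁ - t) * s₂)
    (hβ : ∀ t, β t = ((Real.exp ε - 1) * b + t * s₂ / s) / κ t)
    (hγ : ∀ t, γ t = (((Real.exp ε - 1) * b + t) - (t / s) * ((Real.exp ε - 1) * b + s₁)) / κ t)
    (hs₂1 : 1 ≤ s₂)
    :
    ∀ t t' : ℝ, 0 ≤ t → t < t' → t' ≤ s₁ → β t < β t' := by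
  intro t t' ht htt' ht'
  subst hsdef
  have hA : 0 < (Real.exp ε - 1) * b := by
    have h1 : 1 < Real.exp ε := by nlinarith [Real.add_one_le_exp ε]
    nlinarith
  set A := (Real.exp ε - 1) * b with hAdef
  have hκform : ∀ u : ℝ, κ u = A ^ 2 + A * (s₁ + s₂) + u * s₂ := by
    intro u; rw [hκ]; ring
  have hκt : 0 < κ t := by rw [hκform]; nlinarith
  have hκt' : 0 < κ t' := by rw [hκform]; nlinarith
  have hs0 : 0 < s₁ + s₂ := by linarith
  rw [hβ, hβ, div_lt_div_iff₀ hκt hκt', hκform, hκform]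
  have key : (A * (s₁ + s₂) + t * s₂) * (A ^ 2 + A * (s₁ + s₂) + t' * s₂) <
      (A * (s₁ + s₂) + t' * s₂) * (A ^ 2 + A * (s₁ + s₂) + t * s₂) := by
    nlinarith [mul_pos (sub_pos.mpr htt') (mul_pos (mul_pos (mul_pos hA hA) (by linarith : (0:ℝ) < s₂)) hs0)]
  calc (A + t * s₂ / (s₁ + s₂)) * (A ^ 2 + A * (s₁ + s₂) + t' * s₂)
      = (A * (s₁ + s₂) + t * s₂) * (A ^ 2 + A * (s₁ + s₂) + t' * s₂) / (s₁ + s₂) := by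
        field_simp
    _ < (A * (s₁ + s₂) + t' * s₂) * (A ^ 2 + A * (s₁ + s₂) + t * s₂) / (s₁ + s₂) :=
        by exact div_lt_div_of_pos_right key hs0
    _ = (A + t' * s₂ / (s₁ + s₂)) * (A ^ 2 + A * (s₁ + s₂) + t * s₂) := by
        field_simp
end

section
/- (Strict version of Lemma 3.1, second part) γ is strictly decreasing in the cardinality l: for all real t, t' with 0 ≤ t < t' ≤ s₁, γ(t') < γ(t). -/
theorem blockRR_gamma_strictAnti
    (ε b s₁ s₂ : ℝ) (hε : 0 < ε) (hb : 1 ≤ b) (hs₁ : 0 ≤ s₁) (hs₂ : 0 ≤ s₂)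
    (hs : 1 ≤ s₁ + s₂) (s : ℝ) (hsdef : s = s₁ + s₂)
    (κ β γ : ℝ → ℝ)
    (hκ : ∀ t, κ t = (Real.exp ε * b + s₁ - b) * (Real.exp ε * b + s₂ - b) - (s₁ - t) * s₂)
    (hβ : ∀ t, β t = ((Real.exp ε - 1) * b + t * s₂ / s) / κ t)
    (hγ : ∀ t, γ t = (((Real.exp ε - 1) * b + t) - (t / s) * ((Real.exp ε - 1) * b + s₁)) / κ t)
    :
    ∀ t t' : ℝ, 0 ≤ t → t < t' → t' ≤ s₁ → γ t' < γ t := by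
  intro t t' ht htt' ht's
  have hs0 : (0:ℝ) < s := by rw [hsdef]; linarith
  set A : ℝ := (Real.exp ε - 1) * b with hA
  have hApos : 0 < A := by
    have h1 : 1 < Real.exp ε := by
      rw [← Real.exp_zero]; exact Real.exp_lt_exp.mpr hε
    have hb0 : (0:ℝ) < b := by linarith
    have : 0 < Real.exp ε - 1 := by linarith
    exact mul_pos this hb0
  have hκform : ∀ u : ℝ, κ u = A^2 + A*(s₁+s₂) + u*s₂ := by
    intro u; rw [hκ u, hA]; ring
  have hκt : 0 < κ t := by rw [hκform]; nlinarith
  have hκt' : 0 < κ t' := by rw [hκform]; nlinarith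
  rw [hγ t, hγ t', div_lt_div_iff₀ hκt' hκt]
  have key : ((A + t) - t/s*(A+s₁)) * κ t' - ((A + t') - t'/s*(A+s₁)) * κ t
      = (t'-t)*A^2*(A+s₁)/s := by
    rw [hκform t, hκform t', hsdef]
    field_simp
    ring
  have hpos : 0 < (t'-t)*A^2*(A+s₁)/s := by
    apply div_pos _ hs0
    have h1 : 0 < t' - t := by linarith
    have h2 : 0 < A + s₁ := by linarith
    positivity
  linarith [key, hpos]
end
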